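/- s(K) = 1 (i.e., there exists an m×1 integer matrix satisfying condition (A) for K but no m×2 integer matrix satisfying condition (A) for K) if and only if N(K) ≠ ∅ and any two elements of N(K) have nonempty intersection and any three elements of N(K) have nonempty common intersection (elements not necessarily distinct). -/
import Mathlib


/-- `K` is an abstract simplicial complex on the vertex set `[m]`:
it contains the empty set and is closed under taking subsets. -/
def IsSimplicialComplex (m : ℕ) (K : Set (Finset (Fin m))) : Prop :=
  ∅ ∈ K ∧ ∀ σ ∈ K, ∀ τ ⊆ σ, τ ∈ K

/-- `ω` is a minimal non-simplex of `K`: `ω ∉ K` but every proper subset of `ω` is in `K`. -/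
def MinimalNonSimplex (m : ℕ) (K : Set (Finset (Fin m))) (ω : Finset (Fin m)) : Prop :=
  ω ∉ K ∧ ∀ τ ⊂ ω, τ ∈ K

/-- Condition (A): for every simplex `σ ∈ K` the rows `{Sⁱ : i ∉ σ}`
generate `ℤᵏ` as an abelian group. -/
def CondA (m k : ℕ) (K : Set (Finset (Fin m))) (S : Matrix (Fin m) (Fin k) ℤ) : Prop :=
  ∀ σ ∈ K, Submodule.span ℤ ((fun i => S i) '' {i : Fin m | i ∉ σ}) = ⊤

/-- Condition (A2): for every simplex `σ ∈ K` the rows `{Sⁱ : i ∉ σ}` span `𝔽₂ᵏ`. -/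
def CondA2 (m k : ℕ) (K : Set (Finset (Fin m))) (S : Matrix (Fin m) (Fin k) (ZMod 2)) : Prop :=
  ∀ σ ∈ K, Submodule.span (ZMod 2) ((fun i => S i) '' {i : Fin m | i ∉ σ}) = ⊤

/-- every non-simplex contains a minimal non-simplex -/
lemma exists_mns (m : ℕ) (K : Set (Finset (Fin m))) :
    ∀ s : Finset (Fin m), s ∉ K → ∃ ω ⊆ s, MinimalNonSimplex m K ω := by
  intro s
  induction s using Finset.strongInduction with
  | _ s ih =>
    intro hs
    by_cases h : ∀ τ ⊂ s, τ ∈ K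
    · exact ⟨s, Finset.Subset.refl s, hs, h⟩
    · push_neg at h
      obtain ⟨τ, hτs, hτ⟩ := h
      obtain ⟨ω, hsub, hω⟩ := ih τ hτs hτ
      exact ⟨ω, hsub.trans hτs.subset, hω⟩

/-- a submodule of ℤ² containing e1 and e2 is everything -/
lemma span2_top (p : Submodule ℤ (Fin 2 → ℤ)) (h0 : ![1,0] ∈ p) (h1 : ![0,1] ∈ p) : p = ⊤ := by
  rw [eq_top_iff]
  rintro x -
  have hx : x = x 0 • ![1,0] + x 1 • ![0,1] := by funext j; fin_cases j <;> simp
  rw [hx]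
  exact p.add_mem (p.smul_mem _ h0) (p.smul_mem _ h1)

/-- mod 2 reduction as a ℤ-linear map -/
def red : (Fin 2 → ℤ) →ₗ[ℤ] (Fin 2 → ZMod 2) where
  toFun x := fun j => (x j : ZMod 2)
  map_add' x y := by funext j; simp
  map_smul' c x := by funext j; simp [zsmul_eq_mul]

lemma red_surj : Function.Surjective red := by
  intro y
  choose g hg using fun j => ZMod.intCast_surjective (y j)
  exact ⟨g, funext hg⟩

lemma no_span (v w : Fin 2 → ZMod 2) (hw0 : w ≠ 0) (hwv : w ≠ v)
    (X : Set (Fin 2 → ℤ)) (hX : Submodule.span ℤ X = ⊤)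
    (hv : ∀ x ∈ X, red x = 0 ∨ red x = v) : False := by
  have hmap : Submodule.span ℤ (red '' X) = ⊤ := by
    rw [← Submodule.map_span, hX, Submodule.map_top, LinearMap.range_eq_top.mpr red_surj]
  have hle : Submodule.span ℤ (red '' X) ≤ Submodule.span ℤ ({v} : Set (Fin 2 → ZMod 2)) := by
    apply Submodule.span_le.mpr
    rintro y ⟨x, hx, rfl⟩
    rcases hv x hx with h | h <;> rw [h]
    · exact Submodule.zero_mem _
    · exact Submodule.mem_span_singleton_self v
  have hw : w ∈ Submodule.span ℤ ({v} : Set (Fin 2 → ZMod 2)) := by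
    apply hle; rw [hmap]; trivial
  rw [Submodule.mem_span_singleton] at hw
  obtain ⟨c, hc⟩ := hw
  have h2 : (c : ZMod 2) = 0 ∨ (c : ZMod 2) = 1 := by
    have : ∀ x : ZMod 2, x = 0 ∨ x = 1 := by decide
    exact this _
  have hcv : c • v = fun j => (c : ZMod 2) * v j := by
    funext j
    simp [zsmul_eq_mul]
  rcases h2 with h | h
  · apply hw0
    rw [← hc, hcv, h]
    funext j; simp
  · apply hwv
    rw [← hc, hcv, h]
    funext j; simp

/-- construction: three minimal non-simplices with empty triple intersection give a k=2 matrix -/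
lemma construct2 (m : ℕ) (K : Set (Finset (Fin m))) (hK : IsSimplicialComplex m K)
    (ω₁ ω₂ ω₃ : Finset (Fin m)) (h₁ : MinimalNonSimplex m K ω₁) (h₂ : MinimalNonSimplex m K ω₂)
    (h₃ : MinimalNonSimplex m K ω₃) (hemp : ¬(ω₁ ∩ ω₂ ∩ ω₃).Nonempty) :
    ∃ S : Matrix (Fin m) (Fin 2) ℤ, CondA m 2 K S := by
  classical
  refine ⟨fun i => if i ∈ ω₁ then (if i ∈ ω₂ then ![1,1] else ![0,1]) else ![1,0], ?_⟩
  intro σ hσ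
  have hns : ∀ ω : Finset (Fin m), MinimalNonSimplex m K ω → ∃ a ∈ ω, a ∉ σ := by
    intro ω hω
    by_contra h
    push_neg at h
    exact hω.1 (hK.2 σ hσ ω h)
  obtain ⟨a₁, ha₁, ha₁σ⟩ := hns ω₁ h₁
  obtain ⟨a₂, ha₂, ha₂σ⟩ := hns ω₂ h₂
  obtain ⟨a₃, ha₃, ha₃σ⟩ := hns ω₃ h₃
  set S : Matrix (Fin m) (Fin 2) ℤ :=
    fun i => if i ∈ ω₁ then (if i ∈ ω₂ then ![1,1] else ![0,1]) else ![1,0] with hS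
  have hmem : ∀ a : Fin m, a ∉ σ → S a ∈ (fun i => S i) '' {i : Fin m | i ∉ σ} :=
    fun a ha => ⟨a, ha, rfl⟩
  have m1 : S a₁ ∈ Submodule.span ℤ ((fun i => S i) '' {i : Fin m | i ∉ σ}) :=
    Submodule.subset_span (hmem a₁ ha₁σ)
  have m2 : S a₂ ∈ Submodule.span ℤ ((fun i => S i) '' {i : Fin m | i ∉ σ}) :=
    Submodule.subset_span (hmem a₂ ha₂σ)
  have m3 : S a₃ ∈ Submodule.span ℤ ((fun i => S i) '' {i : Fin m | i ∉ σ}) :=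
    Submodule.subset_span (hmem a₃ ha₃σ)
  set p := Submodule.span ℤ ((fun i => S i) '' {i : Fin m | i ∉ σ})
  have hv3 : S a₃ = ![1,0] ∨ S a₃ = ![0,1] := by
    by_cases h1 : a₃ ∈ ω₁
    · by_cases h2 : a₃ ∈ ω₂
      · exact absurd ⟨a₃, by simp [Finset.mem_inter, h1, h2, ha₃]⟩ hemp
      · right; simp [hS, h1, h2]
    · left; simp [hS, h1]
  have hv1 : S a₁ = ![1,1] ∨ S a₁ = ![0,1] := by
    by_cases h2 : a₁ ∈ ω₂
    · left; simp [hS, ha₁, h2]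
    · right; simp [hS, ha₁, h2]
  have hv2 : S a₂ = ![1,1] ∨ S a₂ = ![1,0] := by
    by_cases h1 : a₂ ∈ ω₁
    · left; simp [hS, h1, ha₂]
    · right; simp [hS, h1]
  rcases hv3 with h3 | h3
  · rw [h3] at m3
    rcases hv1 with h1 | h1
    · rw [h1] at m1
      have : (![0,1] : Fin 2 → ℤ) ∈ p := by
        have := p.sub_mem m1 m3
        have heq : (![1,1] : Fin 2 → ℤ) - ![1,0] = ![0,1] := by decide
        rwa [heq] at this
      exact span2_top p m3 this
    · rw [h1] at m1
      exact span2_top p m3 m1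
  · rw [h3] at m3
    rcases hv2 with h2 | h2
    · rw [h2] at m2
      have : (![1,0] : Fin 2 → ℤ) ∈ p := by
        have := p.sub_mem m2 m3
        have heq : (![1,1] : Fin 2 → ℤ) - ![0,1] = ![1,0] := by decide
        rwa [heq] at this
      exact span2_top p this m3
    · rw [h2] at m2
      exact span2_top p m2 m3

/-- nonexistence: CondA for k=2 gives three minimal non-simplices with empty triple ∩ -/
lemma destruct2 (m : ℕ) (K : Set (Finset (Fin m))) (S : Matrix (Fin m) (Fin 2) ℤ)
    (hA : CondA m 2 K S) :
    ∃ ω₁ ω₂ ω₃ : Finset (Fin m), MinimalNonSimplex m K ω₁ ∧ MinimalNonSimplex m K ω₂ ∧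
      MinimalNonSimplex m K ω₃ ∧ ¬(ω₁ ∩ ω₂ ∩ ω₃).Nonempty := by
  classical
  have key : ∀ v w : Fin 2 → ZMod 2, w ≠ 0 → w ≠ v →
      ∃ ω, MinimalNonSimplex m K ω ∧ ∀ i ∈ ω, red (S i) ≠ 0 ∧ red (S i) ≠ v := by
    intro v w hw0 hwv
    set C : Finset (Fin m) := Finset.univ.filter (fun i => red (S i) ≠ 0 ∧ red (S i) ≠ v) with hC
    have hCK : C ∉ K := by
      intro hmem
      have hspan := hA C hmem
      apply no_span v w hw0 hwv _ hspan
      rintro x ⟨i, hi, rfl⟩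
      simp only [Set.mem_setOf_eq, hC, Finset.mem_filter, Finset.mem_univ, true_and] at hi
      push_neg at hi
      by_cases h0 : red (S i) = 0
      · exact Or.inl h0
      · exact Or.inr (hi h0)
    obtain ⟨ω, hsub, hω⟩ := exists_mns m K C hCK
    refine ⟨ω, hω, fun i hi => ?_⟩
    have := hsub hi
    simpa [hC] using this
  obtain ⟨ω₁, hω₁, hp₁⟩ := key ![1,0] ![0,1] (by decide) (by decide)
  obtain ⟨ω₂, hω₂, hp₂⟩ := key ![0,1] ![1,0] (by decide) (by decide)
  obtain ⟨ω₃, hω₃, hp₃⟩ := key ![1,1] ![1,0] (by decide) (by decide)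
  refine ⟨ω₁, ω₂, ω₃, hω₁, hω₂, hω₃, ?_⟩
  rintro ⟨i, hi⟩
  simp only [Finset.mem_inter] at hi
  obtain ⟨⟨hi₁, hi₂⟩, hi₃⟩ := hi
  have q1 := hp₁ i hi₁
  have q2 := hp₂ i hi₂
  have q3 := hp₃ i hi₃
  have : ∀ y : Fin 2 → ZMod 2, y = 0 ∨ y = ![1,0] ∨ y = ![0,1] ∨ y = ![1,1] := by decide
  rcases this (red (S i)) with h | h | h | h
  · exact q1.1 h
  · exact q1.2 h
  · exact q2.2 h
  · exact q3.2 h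

/-- `s(K) = 1` iff `N(K) ≠ ∅` and any two and any three (not necessarily distinct)
elements of `N(K)` have nonempty (common) intersection. -/
theorem stmt_16 (m : ℕ) (K : Set (Finset (Fin m))) (hK : IsSimplicialComplex m K) :
    ((∃ S : Matrix (Fin m) (Fin 1) ℤ, CondA m 1 K S) ∧
      ¬(∃ S : Matrix (Fin m) (Fin 2) ℤ, CondA m 2 K S)) ↔
      ((∃ ω : Finset (Fin m), MinimalNonSimplex m K ω) ∧
        (∀ τ₁ τ₂ : Finset (Fin m), MinimalNonSimplex m K τ₁ → MinimalNonSimplex m K τ₂ →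
          (τ₁ ∩ τ₂).Nonempty) ∧
        (∀ τ₁ τ₂ τ₃ : Finset (Fin m), MinimalNonSimplex m K τ₁ → MinimalNonSimplex m K τ₂ →
          MinimalNonSimplex m K τ₃ → (τ₁ ∩ τ₂ ∩ τ₃).Nonempty)) := by
  constructor
  · rintro ⟨⟨S1, hS1⟩, hno2⟩
    have hN : ∃ ω : Finset (Fin m), MinimalNonSimplex m K ω := by
      by_contra h
      push_neg at h
      have huniv : Finset.univ ∈ K := by
        by_contra hu
        obtain ⟨ω, -, hω⟩ := exists_mns m K Finset.univ hu
        exact h ω hω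
      have htop := hS1 Finset.univ huniv
      have himg : ((fun i => S1 i) '' {i : Fin m | i ∉ Finset.univ}) = ∅ := by
        simp
      rw [himg, Submodule.span_empty] at htop
      have h1 : (fun _ => (1:ℤ) : Fin 1 → ℤ) ∈ (⊥ : Submodule ℤ (Fin 1 → ℤ)) := by
        rw [htop]; trivial
      rw [Submodule.mem_bot] at h1
      exact one_ne_zero (congrFun h1 0)
    have htriple : ∀ τ₁ τ₂ τ₃ : Finset (Fin m), MinimalNonSimplex m K τ₁ →
        MinimalNonSimplex m K τ₂ → MinimalNonSimplex m K τ₃ → (τ₁ ∩ τ₂ ∩ τ₃).Nonempty := by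
      intro τ₁ τ₂ τ₃ h1 h2 h3
      by_contra h
      exact hno2 (construct2 m K hK τ₁ τ₂ τ₃ h1 h2 h3 h)
    refine ⟨hN, fun τ₁ τ₂ h1 h2 => ?_, htriple⟩
    have := htriple τ₁ τ₂ τ₂ h1 h2 h2
    rwa [Finset.inter_assoc, Finset.inter_self] at this
  · rintro ⟨⟨ω, hω⟩, hpair, htriple⟩
    constructor
    · refine ⟨fun _ _ => 1, ?_⟩
      intro σ hσ
      obtain ⟨i, hi⟩ : ∃ i, i ∉ σ := by
        by_contra h
        push_neg at h
        exact hω.1 (hK.2 σ hσ ω (fun a _ => h a))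
      rw [eq_top_iff]
      rintro x -
      have hmem : (fun _ => (1:ℤ) : Fin 1 → ℤ) ∈
          Submodule.span ℤ ((fun i => (fun _ _ => (1:ℤ) : Matrix (Fin m) (Fin 1) ℤ) i) ''
            {i : Fin m | i ∉ σ}) :=
        Submodule.subset_span ⟨i, hi, rfl⟩
      have hx : x = x 0 • (fun _ => (1:ℤ) : Fin 1 → ℤ) := by
        funext j
        fin_cases j
        simp
      rw [hx]
      exact Submodule.smul_mem _ _ hmem
    · rintro ⟨S, hS⟩
      obtain ⟨ω₁, ω₂, ω₃, h1, h2, h3, hemp⟩ := destruct2 m K S hS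
      exact hemp (htriple ω₁ ω₂ ω₃ h1 h2 h3)
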